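/- For every natural number y ≥ 1: there exists k ≥ 1 with y = 2^k − 1 if and only if for all x with 0 ≤ x ≤ y one has x ^^^ (y − x) = y. -/

import Mathlib

private lemma add_eq_xor_add_two_mul_and (a : ℕ) : ∀ b : ℕ, a + b = (a ^^^ b) + 2 * (a &&& b) := by
  induction a using Nat.binaryRec with
  | zero => simp
  | bit p m ih =>
    intro b
    induction b using Nat.binaryRec with
    | zero => simp
    | bit q n _ =>
      rw [Nat.xor_bit, Nat.land_bit, Nat.bit_val, Nat.bit_val, Nat.bit_val, Nat.bit_val]
      have := ih n
      cases p <;> cases q <;> simp [Bool.toNat] <;> omega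

/-- (NS5): for `y ≥ 1`, `y = 2 ^ k - 1` for some `k ≥ 1` iff
`x ^^^ (y - x) = y` for every `0 ≤ x ≤ y`. -/
theorem pow_sub_one_iff_nimSum_split (y : ℕ) (hy : 1 ≤ y) :
    (∃ k ≥ 1, y = 2 ^ k - 1) ↔ ∀ x, x ≤ y → x ^^^ (y - x) = y := by
  constructor
  · rintro ⟨k, hk1, rfl⟩ x hx
    have hxlt : x < 2 ^ k := lt_of_le_of_lt hx (Nat.sub_lt (Nat.two_pow_pos k) one_pos)
    have hand : x &&& ((2 ^ k - 1) ^^^ x) = 0 := by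
      rw [Nat.and_xor_distrib_left, Nat.and_self,
        Nat.and_two_pow_sub_one_of_lt_two_pow hxlt, Nat.xor_self]
    have hsub : (2 ^ k - 1) - x = (2 ^ k - 1) ^^^ x := by
      have hx2 : x ^^^ ((2 ^ k - 1) ^^^ x) = 2 ^ k - 1 := by
        rw [Nat.xor_comm (2 ^ k - 1) x]; exact xor_cancel_left x (2 ^ k - 1)
      have := add_eq_xor_add_two_mul_and x ((2 ^ k - 1) ^^^ x)
      rw [hand, hx2] at this
      omega
    rw [hsub, Nat.xor_comm (2 ^ k - 1) x, ← Nat.xor_assoc, Nat.xor_self, Nat.zero_xor]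
  · intro h
    refine ⟨Nat.size y, Nat.size_pos.mpr hy, ?_⟩
    by_contra hne
    -- there is a bit i < size y with testBit y i = false
    have hall : ¬ ∀ i < Nat.size y, Nat.testBit y i = true := by
      intro hall
      apply hne
      have h1 : 2 ^ Nat.size y - 1 ≤ y := by
        have : 2 ^ Nat.size y - 1 &&& y = 2 ^ Nat.size y - 1 := by
          apply Nat.eq_of_testBit_eq
          intro i
          rw [Nat.testBit_and]
          rcases lt_or_ge i (Nat.size y) with hi | hi
          · rw [hall i hi, Nat.testBit_two_pow_sub_one, Bool.and_true]
          · rw [Nat.testBit_two_pow_sub_one]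
            simp [Nat.not_lt.mpr hi]
        calc 2 ^ Nat.size y - 1 = 2 ^ Nat.size y - 1 &&& y := this.symm
          _ ≤ y := Nat.and_le_right
      have h2 : y < 2 ^ Nat.size y := Nat.lt_size_self y
      omega
    push_neg at hall
    obtain ⟨i, hi, hbit⟩ := hall
    have hbit' : y.testBit i = false := by simpa using hbit
    have hxle : 2 ^ i ≤ y := Nat.lt_size.mp hi
    have hxy := h (2 ^ i) hxle
    have hid := add_eq_xor_add_two_mul_and (2 ^ i) (y - 2 ^ i)
    have hand0 : 2 ^ i &&& (y - 2 ^ i) = 0 := by omega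
    -- but bit i of y - 2^i is 1, contradiction
    have htb : Nat.testBit (y - 2 ^ i) i = true := by
      rw [Nat.testBit_eq_decide_div_mod_eq]
      have hdiv : y / 2 ^ i % 2 = 0 := by
        have := hbit'
        rw [Nat.testBit_eq_decide_div_mod_eq] at this
        simpa using this
      have hpos : 0 < 2 ^ i := Nat.two_pow_pos i
      have hq : 1 ≤ y / 2 ^ i := (Nat.one_le_div_iff hpos).mpr hxle
      have hyy : 2 ^ i * (y / 2 ^ i) + y % 2 ^ i = y := Nat.div_add_mod y (2 ^ i)
      have hr : y % 2 ^ i < 2 ^ i := Nat.mod_lt y hpos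
      have hsub2 : y - 2 ^ i = 2 ^ i * (y / 2 ^ i - 1) + y % 2 ^ i := by
        have hmul : 2 ^ i * (y / 2 ^ i - 1) = 2 ^ i * (y / 2 ^ i) - 2 ^ i := by
          rw [Nat.mul_sub, Nat.mul_one]
        have hle : 2 ^ i ≤ 2 ^ i * (y / 2 ^ i) := Nat.le_mul_of_pos_right _ hq
        omega
      have hsd : (y - 2 ^ i) / 2 ^ i = y / 2 ^ i - 1 := by
        rw [hsub2, Nat.mul_add_div hpos, Nat.div_eq_of_lt hr, Nat.add_zero]
      rw [hsd]
      simp only [decide_eq_true_eq]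
      omega
    have : Nat.testBit (2 ^ i &&& (y - 2 ^ i)) i = true := by
      rw [Nat.testBit_and, Nat.testBit_two_pow_self, htb, Bool.and_self]
    rw [hand0] at this
    simp at this
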